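/- arXiv:2201.04892 — 2 statements merged into one kernel-verified Lean document; each statement's English description precedes it below -/
import Mathlib

section
/- Let Γ be a countable index set, L : Γ → ℝ with L γ ≥ ℓ₀ for some ℓ₀ > 0, and suppose there exist C₁ > 0 and h ≥ 0 such that for every ℓ > 0 the set {γ ∈ Γ : L γ ≤ ℓ} is finite with cardinality at most C₁ · e^{h·ℓ}. Let Λ : Γ → ℝ with Λ γ > 1 for all γ, and suppose there exist C₂ > 0 and β > 0 with (Λ γ)⁻¹ ≤ C₂ · e^{-β·L γ} for all γ. Let w : Γ → ℂ satisfy |w γ| ≤ A · L γ for some A > 0. Then for every λ ∈ ℂ with Re λ > h - (3/2)·β the doubly indexed family ((n, γ) ∈ ℕ_{≥1} × Γ ↦ e^{-λ·L γ} · (n+1) · (Λ γ)^{-1/2-n} · w γ) is absolutely summable, and the function λ ↦ ∑_{n≥1} ∑_{γ∈Γ} e^{-λ·L γ} (n+1) (Λ γ)^{-1/2-n} w γ is holomorphic on the half-plane {λ ∈ ℂ : Re λ > h - (3/2)β}. -/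
open Complex

lemma FT_count_summable {Γ : Type*} [Countable Γ] (L : Γ → ℝ)
    (hLpos : ∀ γ, 0 < L γ)
    {C₁ h : ℝ} (hC₁ : 0 < C₁) (hh : 0 ≤ h)
    (hcount : ∀ ℓ : ℝ, 0 < ℓ → {γ : Γ | L γ ≤ ℓ}.Finite ∧
      (Nat.card {γ : Γ | L γ ≤ ℓ} : ℝ) ≤ C₁ * Real.exp (h * ℓ))
    {σ : ℝ} (hσ : h < σ) :
    Summable (fun γ : Γ => L γ * Real.exp (-σ * L γ)) := by
  have hσ0 : 0 < σ := lt_of_le_of_lt hh hσ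
  set f : Γ → ℝ := fun γ => L γ * Real.exp (-σ * L γ) with hf
  have hfnn : ∀ γ, 0 ≤ f γ := fun γ => mul_nonneg (hLpos γ).le (Real.exp_pos _).le
  set e : Γ → ℕ := fun γ => ⌊L γ⌋₊ with he
  rw [← (Equiv.sigmaFiberEquiv e).summable_iff]
  apply (summable_sigma_of_nonneg (fun x => hfnn _)).2
  -- facts about fibers
  have hfibsub : ∀ k : ℕ, {γ : Γ | e γ = k} ⊆ {γ : Γ | L γ ≤ (k : ℝ) + 1} := by
    intro k γ hγ
    have h1 : L γ < (⌊L γ⌋₊ : ℝ) + 1 := Nat.lt_floor_add_one _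
    have h2 : (⌊L γ⌋₊ : ℝ) = k := by exact_mod_cast congrArg (Nat.cast (R := ℝ)) hγ
    simp only [Set.mem_setOf_eq]; linarith
  have hfibfin : ∀ k : ℕ, ({γ : Γ | e γ = k}).Finite := fun k =>
    ((hcount ((k : ℝ) + 1) (by positivity)).1).subset (hfibsub k)
  have hbound : ∀ (k : ℕ) (γ : Γ), e γ = k → f γ ≤ ((k : ℝ) + 1) * Real.exp (-σ * k) := by
    intro k γ hγ
    have hk : (k : ℝ) ≤ L γ := by
      rw [← hγ]; exact Nat.floor_le (hLpos γ).le
    have hk1 : L γ ≤ (k : ℝ) + 1 := hfibsub k hγ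
    have hexp : Real.exp (-σ * L γ) ≤ Real.exp (-σ * k) := by
      apply Real.exp_le_exp.2; nlinarith
    exact mul_le_mul hk1 hexp (Real.exp_pos _).le (by positivity)
  refine ⟨?_, ?_⟩
  · intro k
    haveI : Finite {γ : Γ // e γ = k} := (hfibfin k).to_subtype
    exact Summable.of_finite
  · -- bound each fiber sum
    set r : ℝ := Real.exp (h - σ) with hr
    have hr0 : 0 ≤ r := (Real.exp_pos _).le
    have hr1 : r < 1 := Real.exp_lt_one_iff.2 (by linarith)
    have hbase : Summable (fun k : ℕ => ((k : ℝ) + 1) * r ^ k) := by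
      have s1 : Summable (fun k : ℕ => (k : ℝ) * r ^ k) := by
        simpa [pow_one] using
          summable_pow_mul_geometric_of_norm_lt_one 1
            (r := r) (by rwa [Real.norm_eq_abs, _root_.abs_of_nonneg hr0])
      have s2 : Summable (fun k : ℕ => r ^ k) := summable_geometric_of_lt_one hr0 hr1
      exact (s1.add s2).congr (fun k => by ring)
    apply Summable.of_nonneg_of_le
      (fun k => tsum_nonneg (fun y => hfnn _))
      (fun k => ?_) (hbase.mul_left (C₁ * Real.exp h))
    -- fiber sum ≤ (C₁ * exp h) * ((k+1) * r^k)
    haveI : Finite {γ : Γ // e γ = k} := (hfibfin k).to_subtype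
    haveI : Fintype {γ : Γ // e γ = k} := Fintype.ofFinite _
    rw [tsum_fintype]
    calc (∑ y : {γ : Γ // e γ = k}, f y.1)
        ≤ (Finset.univ : Finset {γ : Γ // e γ = k}).card •
            (((k : ℝ) + 1) * Real.exp (-σ * k)) := by
          apply Finset.sum_le_card_nsmul
          intro x _
          exact hbound k x.1 x.2
      _ = (Nat.card {γ : Γ | e γ = k} : ℝ) * (((k : ℝ) + 1) * Real.exp (-σ * k)) := by
          rw [nsmul_eq_mul, Finset.card_univ, ← Nat.card_eq_fintype_card]
          rfl
      _ ≤ (C₁ * Real.exp (h * ((k : ℝ) + 1))) * (((k : ℝ) + 1) * Real.exp (-σ * k)) := by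
          apply mul_le_mul_of_nonneg_right _ (by positivity)
          calc (Nat.card {γ : Γ | e γ = k} : ℝ)
              ≤ (Nat.card {γ : Γ | L γ ≤ (k : ℝ) + 1} : ℝ) := by
                exact_mod_cast Nat.card_mono ((hcount ((k : ℝ) + 1) (by positivity)).1)
                  (hfibsub k)
            _ ≤ C₁ * Real.exp (h * ((k : ℝ) + 1)) :=
                (hcount ((k : ℝ) + 1) (by positivity)).2
      _ = (C₁ * Real.exp h) * (((k : ℝ) + 1) * r ^ k) := by
          rw [hr, ← Real.exp_nat_mul,
            show h * ((k : ℝ) + 1) = (k : ℝ) * h + h by ring, Real.exp_add,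
            show (k : ℝ) * (h - σ) = (k : ℝ) * h + -σ * (k : ℝ) by ring, Real.exp_add]
          ring

lemma FT_master {Γ : Type*} [Countable Γ] (L Λ : Γ → ℝ)
    {ℓ₀ : ℝ} (hℓ₀ : 0 < ℓ₀) (hL : ∀ γ, ℓ₀ ≤ L γ)
    {C₁ h : ℝ} (hC₁ : 0 < C₁) (hh : 0 ≤ h)
    (hcount : ∀ ℓ : ℝ, 0 < ℓ → {γ : Γ | L γ ≤ ℓ}.Finite ∧
      (Nat.card {γ : Γ | L γ ≤ ℓ} : ℝ) ≤ C₁ * Real.exp (h * ℓ))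
    (hΛ : ∀ γ, 1 < Λ γ)
    {C₂ β : ℝ} (hC₂ : 0 < C₂) (hβ : 0 < β)
    (hhyp : ∀ γ, (Λ γ)⁻¹ ≤ C₂ * Real.exp (-β * L γ))
    {A : ℝ} (hA : 0 < A)
    {σ : ℝ} (hσ : h - (3 / 2) * β < σ) :
    Summable (fun p : {n : ℕ // 1 ≤ n} × Γ =>
      Real.exp (-σ * L p.2) * ((p.1.1 : ℝ) + 1) *
        (Λ p.2 ^ (-(1 / 2 : ℝ) - (p.1.1 : ℝ))) * (A * L p.2)) := by
  have hLpos : ∀ γ, 0 < L γ := fun γ => lt_of_lt_of_le hℓ₀ (hL γ)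
  have hΛpos : ∀ γ, 0 < Λ γ := fun γ => lt_trans one_pos (hΛ γ)
  have hρ0 : ∀ γ, 0 ≤ (Λ γ)⁻¹ := fun γ => inv_nonneg.2 (hΛpos γ).le
  have hρ1 : ∀ γ, (Λ γ)⁻¹ < 1 := fun γ => inv_lt_one_of_one_lt₀ (hΛ γ)
  -- rewrite of the rpow
  have h1 : ∀ (γ : Γ) (n : ℕ), Λ γ ^ (-(1 / 2 : ℝ) - (n : ℝ)) =
      Λ γ ^ (-(1 / 2) : ℝ) * (Λ γ)⁻¹ ^ n := by
    intro γ n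
    have key : Λ γ ^ (-(n : ℝ)) = (Λ γ)⁻¹ ^ n := by
      rw [← Real.rpow_natCast ((Λ γ)⁻¹) n, Real.inv_rpow (hΛpos γ).le,
        ← Real.rpow_neg (hΛpos γ).le]
    rw [sub_eq_add_neg, Real.rpow_add (hΛpos γ), key]
  have h2 : ∀ (γ : Γ) (n : ℕ), 1 ≤ n → Λ γ ^ (-(1 / 2 : ℝ) - (n : ℝ)) =
      Λ γ ^ (-(3 / 2) : ℝ) * (Λ γ)⁻¹ ^ (n - 1) := by
    intro γ n hn
    have hcast : (n : ℝ) = ((n - 1 : ℕ) : ℝ) + 1 := by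
      rw [Nat.cast_sub hn]; push_cast; ring
    rw [hcast, show -(1 / 2 : ℝ) - (((n - 1 : ℕ) : ℝ) + 1)
        = -(3 / 2 : ℝ) + (-(((n - 1 : ℕ) : ℝ))) by ring,
      Real.rpow_add (hΛpos γ)]
    have key : Λ γ ^ (-(((n - 1 : ℕ)) : ℝ)) = (Λ γ)⁻¹ ^ (n - 1) := by
      rw [← Real.rpow_natCast ((Λ γ)⁻¹) (n - 1), Real.inv_rpow (hΛpos γ).le,
        ← Real.rpow_neg (hΛpos γ).le]
    rw [key]
  set M : {n : ℕ // 1 ≤ n} × Γ → ℝ := fun p =>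
    Real.exp (-σ * L p.2) * ((p.1.1 : ℝ) + 1) *
      (Λ p.2 ^ (-(1 / 2 : ℝ) - (p.1.1 : ℝ))) * (A * L p.2) with hM
  have hMnn : ∀ p, 0 ≤ M p := by
    intro p
    have := Real.rpow_nonneg (hΛpos p.2).le (-(1 / 2 : ℝ) - (p.1.1 : ℝ))
    have := (hLpos p.2).le
    positivity
  -- row summability (over n, for fixed γ)
  have hrowℕ : ∀ γ : Γ, Summable (fun n : ℕ =>
      Real.exp (-σ * L γ) * ((n : ℝ) + 1) *
        (Λ γ ^ (-(1 / 2 : ℝ) - (n : ℝ))) * (A * L γ)) := by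
    intro γ
    have s1 : Summable (fun n : ℕ => (n : ℝ) * (Λ γ)⁻¹ ^ n) := by
      simpa [pow_one] using
        summable_pow_mul_geometric_of_norm_lt_one 1 (r := (Λ γ)⁻¹)
          (by rw [Real.norm_eq_abs, _root_.abs_of_nonneg (hρ0 γ)]; exact hρ1 γ)
    have s2 : Summable (fun n : ℕ => (Λ γ)⁻¹ ^ n) :=
      summable_geometric_of_lt_one (hρ0 γ) (hρ1 γ)
    have base : Summable (fun n : ℕ => ((n : ℝ) + 1) * (Λ γ)⁻¹ ^ n) :=
      (s1.add s2).congr (fun n => by ring)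
    refine (base.mul_left
      (Real.exp (-σ * L γ) * Λ γ ^ (-(1 / 2) : ℝ) * (A * L γ))).congr (fun n => ?_)
    rw [h1 γ n]; ring
  have hrow : ∀ γ : Γ, Summable (fun n : {n : ℕ // 1 ≤ n} => M (n, γ)) :=
    fun γ => (hrowℕ γ).subtype {n : ℕ | 1 ≤ n}
  -- the geometric constant S
  have hSsum : Summable (fun n : {n : ℕ // 1 ≤ n} =>
      ((n.1 : ℝ) + 1) * (1 / 2 : ℝ) ^ (n.1 - 1)) := by
    have base : Summable (fun n : ℕ => ((n : ℝ) + 1) * (1 / 2 : ℝ) ^ (n - 1)) := by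
      have s1 : Summable (fun n : ℕ => (n : ℝ) * (1 / 2 : ℝ) ^ n) := by
        simpa [pow_one] using
          summable_pow_mul_geometric_of_norm_lt_one 1 (r := (1 / 2 : ℝ)) (by norm_num)
      have s2 : Summable (fun n : ℕ => (1 / 2 : ℝ) ^ n) :=
        summable_geometric_of_lt_one (by norm_num) (by norm_num)
      have big : Summable (fun n : ℕ => 2 * (((n : ℝ) + 1) * (1 / 2 : ℝ) ^ n)) :=
        ((s1.add s2).congr (fun n => by ring)).mul_left 2
      apply Summable.of_nonneg_of_le (fun n => by positivity) (fun n => ?_) big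
      rcases Nat.eq_zero_or_pos n with hn | hn
      · subst hn; norm_num
      · have hss : n - 1 + 1 = n := Nat.succ_pred_eq_of_pos hn
        have hpow : (1 / 2 : ℝ) ^ n = (1 / 2 : ℝ) ^ (n - 1) * (1 / 2) := by
          rw [← pow_succ, hss]
        apply le_of_eq
        rw [hpow]; ring
    exact base.subtype {n : ℕ | 1 ≤ n}
  set S : ℝ := ∑' n : {n : ℕ // 1 ≤ n}, ((n.1 : ℝ) + 1) * (1 / 2 : ℝ) ^ (n.1 - 1) with hS
  have hSnn : 0 ≤ S := tsum_nonneg (fun n => by positivity)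
  -- the exceptional finite set
  set L₀ : ℝ := max 1 (Real.log (2 * C₂) / β) with hL₀
  have hL₀pos : (0 : ℝ) < L₀ := lt_of_lt_of_le one_pos (le_max_left _ _)
  have hfin : ({γ : Γ | L γ ≤ L₀}).Finite := (hcount L₀ hL₀pos).1
  have hρhalf : ∀ γ : Γ, L₀ < L γ → (Λ γ)⁻¹ ≤ 1 / 2 := by
    intro γ hγ
    have h3 : Real.log (2 * C₂) ≤ β * L₀ := by
      rw [← div_le_iff₀' hβ]; exact le_max_right _ _
    have h4 : Real.exp (-β * L γ) ≤ (2 * C₂)⁻¹ := by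
      rw [← Real.exp_log (by positivity : (0 : ℝ) < 2 * C₂), ← Real.exp_neg]
      apply Real.exp_le_exp.2
      nlinarith
    calc (Λ γ)⁻¹ ≤ C₂ * Real.exp (-β * L γ) := hhyp γ
      _ ≤ C₂ * (2 * C₂)⁻¹ := mul_le_mul_of_nonneg_left h4 hC₂.le
      _ = 1 / 2 := by field_simp
  -- column sums bound for large L
  set σ' : ℝ := σ + (3 / 2) * β with hσ'
  have hσ'h : h < σ' := by rw [hσ']; linarith
  have hcol : ∀ γ : Γ, L₀ < L γ →
      (∑' n : {n : ℕ // 1 ≤ n}, M (n, γ)) ≤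
        (A * C₂ ^ ((3 : ℝ) / 2) * S) * (L γ * Real.exp (-σ' * L γ)) := by
    intro γ hγ
    have hterm : ∀ n : {n : ℕ // 1 ≤ n}, M (n, γ) ≤
        (A * C₂ ^ ((3 : ℝ) / 2) * (L γ * Real.exp (-σ' * L γ))) *
          (((n.1 : ℝ) + 1) * (1 / 2 : ℝ) ^ (n.1 - 1)) := by
      intro n
      have hΛ32 : Λ γ ^ (-(3 / 2) : ℝ) ≤ C₂ ^ ((3 : ℝ) / 2) * Real.exp (-(3 / 2) * β * L γ) := by
        have e1 : Λ γ ^ (-(3 / 2) : ℝ) = ((Λ γ)⁻¹) ^ ((3 : ℝ) / 2) := by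
          rw [Real.inv_rpow (hΛpos γ).le, ← Real.rpow_neg (hΛpos γ).le]
        rw [e1]
        calc ((Λ γ)⁻¹) ^ ((3 : ℝ) / 2) ≤ (C₂ * Real.exp (-β * L γ)) ^ ((3 : ℝ) / 2) :=
              Real.rpow_le_rpow (hρ0 γ) (hhyp γ) (by norm_num)
          _ = C₂ ^ ((3 : ℝ) / 2) * Real.exp (-(3 / 2) * β * L γ) := by
              rw [Real.mul_rpow hC₂.le (Real.exp_pos _).le, ← Real.exp_mul]
              ring_nf
      have hpow : ((Λ γ)⁻¹) ^ (n.1 - 1) ≤ (1 / 2 : ℝ) ^ (n.1 - 1) :=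
        pow_le_pow_left₀ (hρ0 γ) (hρhalf γ hγ) _
      calc M (n, γ)
          = (Real.exp (-σ * L γ) * (A * L γ) * ((n.1 : ℝ) + 1)) *
              (Λ γ ^ (-(3 / 2) : ℝ) * ((Λ γ)⁻¹) ^ (n.1 - 1)) := by
            rw [hM]; dsimp only; rw [h2 γ n.1 n.2]; ring
        _ ≤ (Real.exp (-σ * L γ) * (A * L γ) * ((n.1 : ℝ) + 1)) *
              ((C₂ ^ ((3 : ℝ) / 2) * Real.exp (-(3 / 2) * β * L γ)) * (1 / 2 : ℝ) ^ (n.1 - 1)) := by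
            apply mul_le_mul_of_nonneg_left _
              (mul_nonneg (mul_nonneg (Real.exp_pos _).le
                (mul_nonneg hA.le (hLpos γ).le)) (by positivity))
            exact mul_le_mul hΛ32 hpow (pow_nonneg (hρ0 γ) _)
              (mul_nonneg (Real.rpow_nonneg hC₂.le _) (Real.exp_pos _).le)
        _ = (A * C₂ ^ ((3 : ℝ) / 2) * (L γ * Real.exp (-σ' * L γ))) *
              (((n.1 : ℝ) + 1) * (1 / 2 : ℝ) ^ (n.1 - 1)) := by
            rw [hσ', show -(σ + (3 / 2) * β) * L γ = -σ * L γ + -(3 / 2) * β * L γ by ring,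
              Real.exp_add]
            ring
    calc (∑' n : {n : ℕ // 1 ≤ n}, M (n, γ))
        ≤ ∑' n : {n : ℕ // 1 ≤ n},
            (A * C₂ ^ ((3 : ℝ) / 2) * (L γ * Real.exp (-σ' * L γ))) *
              (((n.1 : ℝ) + 1) * (1 / 2 : ℝ) ^ (n.1 - 1)) :=
          Summable.tsum_le_tsum hterm (hrow γ) (hSsum.mul_left _)
      _ = (A * C₂ ^ ((3 : ℝ) / 2) * S) * (L γ * Real.exp (-σ' * L γ)) := by
          rw [tsum_mul_left]; ring
  -- assemble: summability of the column sums over Γ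
  have hT : Summable (fun γ : Γ => ∑' n : {n : ℕ // 1 ≤ n}, M (n, γ)) := by
    rw [← hfin.summable_compl_iff]
    apply Summable.of_nonneg_of_le
      (fun γ => tsum_nonneg (fun n => hMnn _))
      (fun γ => hcol γ.1 (lt_of_not_ge γ.2))
      (((FT_count_summable L hLpos hC₁ hh hcount hσ'h).mul_left
        (A * C₂ ^ ((3 : ℝ) / 2) * S)).subtype _)
  have hN : Summable (fun q : Γ × {n : ℕ // 1 ≤ n} => M (q.2, q.1)) := by
    apply (summable_prod_of_nonneg (fun q => hMnn _)).2
    exact ⟨hrow, hT⟩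
  exact ((Equiv.prodComm Γ {n : ℕ // 1 ≤ n}).summable_iff).1 hN

/-- The tail `∑_{n≥1} ∑_γ e^{-λ L_γ} (n+1) Λ_γ^{-1/2-n} w_γ` of the expanded
Faure–Tsujii weighted zeta function converges absolutely for
`Re λ > h - (3/2)β` and is holomorphic on that half-plane. -/
theorem FT_zeta_tail_holomorphic
    (Γ : Type*) [Countable Γ] (L : Γ → ℝ) (Λ : Γ → ℝ) (w : Γ → ℂ)
    (ℓ₀ : ℝ) (hℓ₀ : 0 < ℓ₀) (hL : ∀ γ, ℓ₀ ≤ L γ)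
    (C₁ h : ℝ) (hC₁ : 0 < C₁) (hh : 0 ≤ h)
    (hcount : ∀ ℓ : ℝ, 0 < ℓ → {γ : Γ | L γ ≤ ℓ}.Finite ∧
      (Nat.card {γ : Γ | L γ ≤ ℓ} : ℝ) ≤ C₁ * Real.exp (h * ℓ))
    (hΛ : ∀ γ, 1 < Λ γ)
    (C₂ β : ℝ) (hC₂ : 0 < C₂) (hβ : 0 < β)
    (hhyp : ∀ γ, (Λ γ)⁻¹ ≤ C₂ * Real.exp (-β * L γ))
    (A : ℝ) (hA : 0 < A) (hw : ∀ γ, ‖w γ‖ ≤ A * L γ) :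
    (∀ lam : ℂ, h - (3 / 2) * β < lam.re →
      Summable (fun p : {n : ℕ // 1 ≤ n} × Γ =>
        ‖Complex.exp (-lam * (L p.2 : ℂ)) * ((p.1.1 : ℂ) + 1) *
          ((Λ p.2 ^ (-(1 / 2 : ℝ) - (p.1.1 : ℝ)) : ℝ) : ℂ) * w p.2‖)) ∧
    DifferentiableOn ℂ
      (fun lam : ℂ => ∑' n : {n : ℕ // 1 ≤ n}, ∑' γ : Γ,
        Complex.exp (-lam * (L γ : ℂ)) * ((n.1 : ℂ) + 1) *
          ((Λ γ ^ (-(1 / 2 : ℝ) - (n.1 : ℝ)) : ℝ) : ℂ) * w γ)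
      {lam : ℂ | h - (3 / 2) * β < lam.re} := by
  have hLpos : ∀ γ, 0 < L γ := fun γ => lt_of_lt_of_le hℓ₀ (hL γ)
  have hΛpos : ∀ γ, 0 < Λ γ := fun γ => lt_trans one_pos (hΛ γ)
  have hrnn : ∀ (γ : Γ) (n : ℕ), 0 ≤ Λ γ ^ (-(1 / 2 : ℝ) - (n : ℝ)) :=
    fun γ n => Real.rpow_nonneg (hΛpos γ).le _
  have hnorm : ∀ (lam : ℂ) (n : ℕ) (γ : Γ),
      ‖Complex.exp (-lam * (L γ : ℂ)) * ((n : ℂ) + 1) *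
        ((Λ γ ^ (-(1 / 2 : ℝ) - (n : ℝ)) : ℝ) : ℂ) * w γ‖
      = Real.exp (-lam.re * L γ) * ((n : ℝ) + 1) *
          (Λ γ ^ (-(1 / 2 : ℝ) - (n : ℝ))) * ‖w γ‖ := by
    intro lam n γ
    have hre : (-lam * ((L γ : ℝ) : ℂ)).re = -lam.re * L γ := by
      simp [Complex.mul_re]
    have hn1 : ((n : ℂ) + 1) = (((n : ℝ) + 1 : ℝ) : ℂ) := by push_cast; ring
    rw [norm_mul, norm_mul, norm_mul, hn1, Complex.norm_real, Complex.norm_real,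
      Complex.norm_exp, hre,
      Real.norm_eq_abs, Real.norm_eq_abs, _root_.abs_of_nonneg (hrnn γ n),
      _root_.abs_of_nonneg (by positivity : (0 : ℝ) ≤ (n : ℝ) + 1)]
  have hcomp : ∀ (lam : ℂ) (σ₀ : ℝ), σ₀ ≤ lam.re → ∀ (n : ℕ) (γ : Γ),
      ‖Complex.exp (-lam * (L γ : ℂ)) * ((n : ℂ) + 1) *
        ((Λ γ ^ (-(1 / 2 : ℝ) - (n : ℝ)) : ℝ) : ℂ) * w γ‖
      ≤ Real.exp (-σ₀ * L γ) * ((n : ℝ) + 1) *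
          (Λ γ ^ (-(1 / 2 : ℝ) - (n : ℝ))) * (A * L γ) := by
    intro lam σ₀ hσ₀ n γ
    rw [hnorm]
    have hexp : Real.exp (-lam.re * L γ) ≤ Real.exp (-σ₀ * L γ) := by
      apply Real.exp_le_exp.2; nlinarith [hLpos γ]
    apply mul_le_mul
    · exact mul_le_mul_of_nonneg_right
        (mul_le_mul_of_nonneg_right hexp (by positivity)) (hrnn γ n)
    · exact hw γ
    · exact norm_nonneg _
    · exact mul_nonneg (mul_nonneg (Real.exp_pos _).le (by positivity)) (hrnn γ n)
  constructor
  · intro lam hlam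
    exact Summable.of_nonneg_of_le (fun p => norm_nonneg _)
      (fun p => hcomp lam lam.re le_rfl p.1.1 p.2)
      (FT_master L Λ hℓ₀ hL hC₁ hh hcount hΛ hC₂ hβ hhyp hA hlam)
  · intro lam hlam
    simp only [Set.mem_setOf_eq] at hlam
    apply DifferentiableAt.differentiableWithinAt
    set σ₀ : ℝ := (h - (3 / 2) * β + lam.re) / 2 with hσ₀def
    have hσ₀c : h - (3 / 2) * β < σ₀ := by rw [hσ₀def]; linarith
    have hσ₀lam : σ₀ < lam.re := by rw [hσ₀def]; linarith
    have hU : IsOpen {z : ℂ | σ₀ < z.re} :=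
      isOpen_lt continuous_const Complex.continuous_re
    have hM' := FT_master L Λ hℓ₀ hL hC₁ hh hcount hΛ hC₂ hβ hhyp hA (σ := σ₀) hσ₀c
    have hM'nn : ∀ p : {n : ℕ // 1 ≤ n} × Γ,
        0 ≤ Real.exp (-σ₀ * L p.2) * ((p.1.1 : ℝ) + 1) *
          (Λ p.2 ^ (-(1 / 2 : ℝ) - (p.1.1 : ℝ))) * (A * L p.2) :=
      fun p => mul_nonneg (mul_nonneg (mul_nonneg (Real.exp_pos _).le
        (by positivity)) (hrnn _ _)) (mul_nonneg hA.le (hLpos _).le)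
    have pair := (summable_prod_of_nonneg hM'nn).1 hM'
    have main : DifferentiableOn ℂ
        (fun z : ℂ => ∑' n : {n : ℕ // 1 ≤ n}, ∑' γ : Γ,
          Complex.exp (-z * (L γ : ℂ)) * ((n.1 : ℂ) + 1) *
            ((Λ γ ^ (-(1 / 2 : ℝ) - (n.1 : ℝ)) : ℝ) : ℂ) * w γ)
        {z : ℂ | σ₀ < z.re} := by
      refine differentiableOn_tsum_of_summable_norm pair.2 ?_ hU ?_
      · intro n
        refine differentiableOn_tsum_of_summable_norm (pair.1 n) ?_ hU ?_
        · intro γ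
          apply Differentiable.differentiableOn
          exact ((((differentiable_id.neg).mul_const _).cexp).mul_const _).mul_const _
            |>.mul_const _
        · intro γ z hz
          exact hcomp z σ₀ (le_of_lt hz) n.1 γ
      · intro n z hz
        have hsum : Summable (fun γ : Γ =>
            ‖Complex.exp (-z * (L γ : ℂ)) * ((n.1 : ℂ) + 1) *
              ((Λ γ ^ (-(1 / 2 : ℝ) - (n.1 : ℝ)) : ℝ) : ℂ) * w γ‖) :=
          Summable.of_nonneg_of_le (fun _ => norm_nonneg _)
            (fun γ => hcomp z σ₀ (le_of_lt hz) n.1 γ) (pair.1 n)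
        calc ‖∑' γ : Γ, Complex.exp (-z * (L γ : ℂ)) * ((n.1 : ℂ) + 1) *
              ((Λ γ ^ (-(1 / 2 : ℝ) - (n.1 : ℝ)) : ℝ) : ℂ) * w γ‖
            ≤ ∑' γ : Γ, ‖Complex.exp (-z * (L γ : ℂ)) * ((n.1 : ℂ) + 1) *
              ((Λ γ ^ (-(1 / 2 : ℝ) - (n.1 : ℝ)) : ℝ) : ℂ) * w γ‖ :=
              norm_tsum_le_tsum_norm hsum
          _ ≤ ∑' γ : Γ, Real.exp (-σ₀ * L γ) * ((n.1 : ℝ) + 1) *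
              (Λ γ ^ (-(1 / 2 : ℝ) - (n.1 : ℝ))) * (A * L γ) :=
              Summable.tsum_le_tsum (fun γ => hcomp z σ₀ (le_of_lt hz) n.1 γ) hsum (pair.1 n)
    exact main.differentiableAt (hU.mem_nhds hσ₀lam)
end

section
/- Let Γ be a countable index set, L : Γ → ℝ with L γ ≥ ℓ₀ for some ℓ₀ > 0, and suppose there exist C₁ > 0 and h ≥ 0 such that for every ℓ > 0 the set {γ ∈ Γ : L γ ≤ ℓ} is finite with cardinality at most C₁ · e^{h·ℓ}. Let Λ : Γ → ℝ with Λ γ > 1 for all γ, and suppose there exist C₂ > 0 and β > 0 with (Λ γ)⁻¹ ≤ C₂ · e^{-β·L γ} for all γ. Let w : Γ → ℂ satisfy |w γ| ≤ A · L γ for some A > 0. Then for every λ ∈ ℂ with Re λ > h - (3/2)·β the doubly indexed family ((n, γ) ∈ ℕ_{≥1} × Γ ↦ e^{-λ·L γ} · (Λ γ)^{-1/2-n} · w γ) is absolutely summable. -/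
open Complex

lemma aux_summable_L_exp {Γ : Type*} [Countable Γ] (L : Γ → ℝ) (ℓ₀ : ℝ) (hℓ₀ : 0 < ℓ₀)
    (hL : ∀ γ, ℓ₀ ≤ L γ)
    (C₁ h : ℝ) (hC₁ : 0 < C₁) (hh : 0 ≤ h)
    (hcount : ∀ ℓ : ℝ, 0 < ℓ → {γ : Γ | L γ ≤ ℓ}.Finite ∧
      (Nat.card {γ : Γ | L γ ≤ ℓ} : ℝ) ≤ C₁ * Real.exp (h * ℓ))
    (c : ℝ) (hc : h < c) :
    Summable (fun γ => L γ * Real.exp (-c * L γ)) := by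
  have hc0 : 0 < c := lt_of_le_of_lt hh hc
  set ψ : ℕ → ℝ := fun k =>
    (C₁ * Real.exp (h * (ℓ₀ + k + 1))) * ((ℓ₀ + k + 1) * Real.exp (-c * (ℓ₀ + k))) with hψ
  have hψ_eq : ∀ k : ℕ, ψ k =
      (C₁ * Real.exp (h * ℓ₀ + h - c * ℓ₀)) * ((ℓ₀ + k + 1) * (Real.exp (h - c)) ^ k) := by
    intro k
    have e : Real.exp (h * (ℓ₀ + k + 1)) * Real.exp (-c * (ℓ₀ + k)) =
        Real.exp (h * ℓ₀ + h - c * ℓ₀) * Real.exp (h - c) ^ k := by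
      rw [← Real.exp_nat_mul, ← Real.exp_add, ← Real.exp_add]
      congr 1
      ring
    show (C₁ * Real.exp (h * (ℓ₀ + k + 1))) * ((ℓ₀ + k + 1) * Real.exp (-c * (ℓ₀ + k))) = _
    linear_combination (C₁ * (ℓ₀ + (k : ℝ) + 1)) * e
  have hr : |Real.exp (h - c)| < 1 := by
    rw [abs_of_pos (Real.exp_pos _)]
    exact Real.exp_lt_one_iff.mpr (by linarith)
  have hψ_sum : Summable ψ := by
    have h1 : Summable (fun k : ℕ => (ℓ₀ + k + 1) * (Real.exp (h - c)) ^ k) := by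
      have hgeo : Summable (fun k : ℕ => (Real.exp (h - c)) ^ k) :=
        summable_geometric_of_lt_one (Real.exp_pos _).le (by simpa using hr)
      have hkgeo : Summable (fun k : ℕ => (k : ℝ) * (Real.exp (h - c)) ^ k) := by
        simpa using summable_pow_mul_geometric_of_norm_lt_one (R := ℝ) 1 (by simpa using hr)
      have := (hkgeo.add (hgeo.mul_left (ℓ₀ + 1)))
      refine this.congr fun k => ?_
      ring
    exact (h1.mul_left _).congr fun k => (hψ_eq k).symm
  have hψ_nonneg : ∀ k, 0 ≤ ψ k := by
    intro k
    have h1 : (0:ℝ) ≤ ℓ₀ + k + 1 := by positivity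
    have : ψ k = (C₁ * Real.exp (h * (ℓ₀ + k + 1))) * ((ℓ₀ + k + 1) * Real.exp (-c * (ℓ₀ + k))) := rfl
    rw [this]
    positivity
  refine summable_of_sum_le (c := ∑' k, ψ k)
    (fun γ => mul_nonneg (le_trans hℓ₀.le (hL γ)) (Real.exp_pos _).le) ?_
  intro u
  set key : Γ → ℕ := fun γ => ⌊L γ - ℓ₀⌋₊ with hkey
  set N := (u.sup key) + 1 with hN
  have hmap : ∀ γ ∈ u, key γ ∈ Finset.range N := by
    intro γ hγ
    exact Finset.mem_range.mpr (Nat.lt_succ_of_le (Finset.le_sup hγ))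
  rw [← Finset.sum_fiberwise_of_maps_to hmap]
  have hband : ∀ k : ℕ, ∀ γ ∈ u.filter (fun γ => key γ = k),
      ℓ₀ + k ≤ L γ ∧ L γ < ℓ₀ + k + 1 := by
    intro k γ hγ
    have hk : ⌊L γ - ℓ₀⌋₊ = k := (Finset.mem_filter.mp hγ).2
    have h0 : (0:ℝ) ≤ L γ - ℓ₀ := by linarith [hL γ]
    have h1 := Nat.lt_floor_add_one (L γ - ℓ₀)
    have h2 := Nat.floor_le h0
    rw [hk] at h1 h2
    constructor <;> linarith
  have hstep : ∀ k ∈ Finset.range N,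
      ∑ γ ∈ u.filter (fun γ => key γ = k), L γ * Real.exp (-c * L γ) ≤ ψ k := by
    intro k _
    have hbound : ∀ γ ∈ u.filter (fun γ => key γ = k),
        L γ * Real.exp (-c * L γ) ≤ (ℓ₀ + k + 1) * Real.exp (-c * (ℓ₀ + k)) := by
      intro γ hγ
      obtain ⟨hlb, hub⟩ := hband k γ hγ
      have hexp := Real.exp_le_exp.mpr (by nlinarith : -c * L γ ≤ -c * (ℓ₀ + k))
      have hLγ0 : 0 ≤ L γ := le_trans hℓ₀.le (hL γ)
      exact mul_le_mul hub.le hexp (Real.exp_pos _).le (by positivity)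
    calc ∑ γ ∈ u.filter (fun γ => key γ = k), L γ * Real.exp (-c * L γ)
        ≤ (u.filter (fun γ => key γ = k)).card • ((ℓ₀ + k + 1) * Real.exp (-c * (ℓ₀ + k))) :=
          Finset.sum_le_card_nsmul _ _ _ hbound
      _ ≤ ψ k := by
          rw [nsmul_eq_mul]
          have hℓpos : (0:ℝ) < ℓ₀ + k + 1 := by positivity
          have hfin := (hcount (ℓ₀ + k + 1) hℓpos)
          have hsub : u.filter (fun γ => key γ = k) ⊆ hfin.1.toFinset := by
            intro γ hγ
            have := (hband k γ hγ).2
            rw [Set.Finite.mem_toFinset]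
            exact this.le
          have h2 : Nat.card {γ : Γ | L γ ≤ ℓ₀ + (k : ℝ) + 1} = hfin.1.toFinset.card :=
            Nat.card_eq_card_finite_toFinset hfin.1
          have hcard : ((u.filter (fun γ => key γ = k)).card : ℝ)
              ≤ C₁ * Real.exp (h * (ℓ₀ + k + 1)) := by
            calc ((u.filter (fun γ => key γ = k)).card : ℝ)
                ≤ (hfin.1.toFinset.card : ℝ) := Nat.cast_le.mpr (Finset.card_le_card hsub)
              _ = (Nat.card {γ : Γ | L γ ≤ ℓ₀ + (k : ℝ) + 1} : ℝ) := Nat.cast_inj.mpr h2.symm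
              _ ≤ _ := hfin.2
          have hpos : (0:ℝ) ≤ (ℓ₀ + k + 1) * Real.exp (-c * (ℓ₀ + k)) := by positivity
          exact mul_le_mul_of_nonneg_right hcard hpos
  calc ∑ k ∈ Finset.range N, ∑ γ ∈ u.filter (fun γ => key γ = k), L γ * Real.exp (-c * L γ)
      ≤ ∑ k ∈ Finset.range N, ψ k := Finset.sum_le_sum hstep
    _ ≤ ∑' k, ψ k := Summable.sum_le_tsum _ (fun k _ => hψ_nonneg k) hψ_sum

/-- The tail `∑_{n≥1} ∑_γ e^{-λ L_γ} Λ_γ^{-1/2-n} w_γ` of the expanded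
semiclassical weighted zeta function is absolutely summable for
`Re λ > h - (3/2)β`. -/
theorem sc_zeta_tail_summable
    (Γ : Type*) [Countable Γ] (L : Γ → ℝ) (Λ : Γ → ℝ) (w : Γ → ℂ)
    (ℓ₀ : ℝ) (hℓ₀ : 0 < ℓ₀) (hL : ∀ γ, ℓ₀ ≤ L γ)
    (C₁ h : ℝ) (hC₁ : 0 < C₁) (hh : 0 ≤ h)
    (hcount : ∀ ℓ : ℝ, 0 < ℓ → {γ : Γ | L γ ≤ ℓ}.Finite ∧
      (Nat.card {γ : Γ | L γ ≤ ℓ} : ℝ) ≤ C₁ * Real.exp (h * ℓ))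
    (hΛ : ∀ γ, 1 < Λ γ)
    (C₂ β : ℝ) (hC₂ : 0 < C₂) (hβ : 0 < β)
    (hhyp : ∀ γ, (Λ γ)⁻¹ ≤ C₂ * Real.exp (-β * L γ))
    (A : ℝ) (hA : 0 < A) (hw : ∀ γ, ‖w γ‖ ≤ A * L γ) :
    ∀ lam : ℂ, h - (3 / 2) * β < lam.re →
      Summable (fun p : {n : ℕ // 1 ≤ n} × Γ =>
        ‖Complex.exp (-lam * (L p.2 : ℂ)) *
          ((Λ p.2 ^ (-(1 / 2 : ℝ) - (p.1.1 : ℝ)) : ℝ) : ℂ) * w p.2‖) := by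
  intro lam hlam
  -- a uniform geometric ratio `q < 1` with `(Λ γ)⁻¹ ≤ q` for all `γ`
  set ℓ₁ : ℝ := max ℓ₀ (Real.log (2 * C₂) / β) with hℓ₁
  have hℓ₁pos : 0 < ℓ₁ := lt_of_lt_of_le hℓ₀ (le_max_left _ _)
  obtain ⟨hSfin, -⟩ := hcount ℓ₁ hℓ₁pos
  set F : Finset ℝ := insert (1/2 : ℝ) (hSfin.toFinset.image fun γ => (Λ γ)⁻¹) with hF
  have hFne : F.Nonempty := Finset.insert_nonempty _ _
  set q : ℝ := F.max' hFne with hqdef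
  have hq1 : q < 1 := by
    rw [hqdef]
    rw [Finset.max'_lt_iff]
    intro x hx
    rw [hF, Finset.mem_insert] at hx
    rcases hx with rfl | hx
    · norm_num
    · obtain ⟨γ, -, rfl⟩ := Finset.mem_image.mp hx
      exact inv_lt_one_of_one_lt₀ (hΛ γ)
  have hq0 : (0:ℝ) < q := lt_of_lt_of_le (by norm_num : (0:ℝ) < 1/2)
    (Finset.le_max' _ _ (Finset.mem_insert_self _ _))
  have hq : ∀ γ, (Λ γ)⁻¹ ≤ q := by
    intro γ
    by_cases hγ : L γ ≤ ℓ₁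
    · refine Finset.le_max' _ _ ?_
      rw [hF, Finset.mem_insert]
      right
      exact Finset.mem_image.mpr ⟨γ, hSfin.mem_toFinset.mpr hγ, rfl⟩
    · push_neg at hγ
      have h1 : Real.log (2 * C₂) / β < L γ := lt_of_le_of_lt (le_max_right _ _) hγ
      have h2 : Real.log (2 * C₂) < β * L γ := by
        rw [div_lt_iff₀ hβ] at h1
        linarith
      have h3 : C₂ * Real.exp (-β * L γ) ≤ 1/2 := by
        have h4 : (2 * C₂) * Real.exp (-β * L γ) ≤ 1 := by
          have := Real.exp_lt_exp.mpr h2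
          rw [Real.exp_log (by positivity)] at this
          rw [neg_mul, Real.exp_neg]
          rw [mul_inv_le_iff₀ (Real.exp_pos _)]
          nlinarith [this]
        linarith
      refine le_trans (le_trans (hhyp γ) h3) ?_
      exact Finset.le_max' _ _ (Finset.mem_insert_self _ _)
  -- exponential rate
  set c : ℝ := lam.re + (3/2) * β with hcdef
  have hc : h < c := by rw [hcdef]; linarith
  -- the majorant and its summability
  have hΓsum : Summable (fun γ => L γ * Real.exp (-c * L γ)) :=
    aux_summable_L_exp L ℓ₀ hℓ₀ hL C₁ h hC₁ hh hcount c hc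
  have hgsum : Summable (fun γ => (C₂ ^ ((3:ℝ)/2) * A) * (L γ * Real.exp (-c * L γ))) :=
    hΓsum.mul_left _
  have hnsum : Summable (fun m : {n : ℕ // 1 ≤ n} => q ^ (m.1 - 1)) := by
    have hgeo : Summable (fun k : ℕ => q ^ k) :=
      summable_geometric_of_lt_one hq0.le hq1
    have hinj : Function.Injective (fun m : {n : ℕ // 1 ≤ n} => m.1 - 1) := by
      intro a b hab
      simp only at hab
      exact Subtype.ext (by omega)
    exact hgeo.comp_injective hinj
  have hprod : Summable (fun p : {n : ℕ // 1 ≤ n} × Γ =>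
      q ^ (p.1.1 - 1) * ((C₂ ^ ((3:ℝ)/2) * A) * (L p.2 * Real.exp (-c * L p.2)))) :=
    hnsum.mul_of_nonneg hgsum (fun m => by positivity)
      (fun γ => by
        have h0 : (0:ℝ) ≤ L γ := le_trans hℓ₀.le (hL γ)
        positivity)
  -- pointwise bound
  refine Summable.of_nonneg_of_le (fun p => norm_nonneg _) ?_ hprod
  rintro ⟨⟨n, hn⟩, γ⟩
  have hΛ0 : 0 < Λ γ := lt_trans one_pos (hΛ γ)
  have hLγ0 : 0 < L γ := lt_of_lt_of_le hℓ₀ (hL γ)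
  -- the norm
  have hnorm : ‖Complex.exp (-lam * (L γ : ℂ)) *
      ((Λ γ ^ (-(1 / 2 : ℝ) - (n : ℝ)) : ℝ) : ℂ) * w γ‖ =
      Real.exp (-lam.re * L γ) * (Λ γ ^ (-(1 / 2 : ℝ) - (n : ℝ))) * ‖w γ‖ := by
    rw [norm_mul, norm_mul]
    congr 2
    · rw [Complex.norm_exp]
      congr 1
      simp [Complex.mul_re]
    · rw [Complex.norm_real, Real.norm_eq_abs,
        abs_of_pos (Real.rpow_pos_of_pos hΛ0 _)]
  rw [hnorm]
  -- split the rpow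
  have hsplit : Λ γ ^ (-(1 / 2 : ℝ) - (n : ℝ)) =
      (Λ γ)⁻¹ ^ ((3:ℝ)/2) * ((Λ γ)⁻¹) ^ (n - 1) := by
    rw [Real.inv_rpow hΛ0.le, ← Real.rpow_neg hΛ0.le, inv_pow,
      ← Real.rpow_natCast (Λ γ) (n - 1), ← Real.rpow_neg hΛ0.le, ← Real.rpow_add hΛ0]
    congr 1
    push_cast [Nat.cast_sub hn]
    ring
  have h32 : (Λ γ)⁻¹ ^ ((3:ℝ)/2) ≤ C₂ ^ ((3:ℝ)/2) * Real.exp (-((3:ℝ)/2) * β * L γ) := by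
    calc (Λ γ)⁻¹ ^ ((3:ℝ)/2)
        ≤ (C₂ * Real.exp (-β * L γ)) ^ ((3:ℝ)/2) :=
          Real.rpow_le_rpow (inv_nonneg.mpr hΛ0.le) (hhyp γ) (by norm_num)
      _ = C₂ ^ ((3:ℝ)/2) * Real.exp (-((3:ℝ)/2) * β * L γ) := by
          rw [Real.mul_rpow hC₂.le (Real.exp_pos _).le, ← Real.exp_mul]
          congr 2
          ring
  have hpow : ((Λ γ)⁻¹) ^ (n - 1) ≤ q ^ (n - 1) :=
    pow_le_pow_left₀ (inv_nonneg.mpr hΛ0.le) (hq γ) _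
  have hwb : ‖w γ‖ ≤ A * L γ := hw γ
  have key : Real.exp (-lam.re * L γ) * (Λ γ ^ (-(1 / 2 : ℝ) - (n : ℝ))) * ‖w γ‖ ≤
      Real.exp (-lam.re * L γ) *
        ((C₂ ^ ((3:ℝ)/2) * Real.exp (-((3:ℝ)/2) * β * L γ)) * q ^ (n - 1)) * (A * L γ) := by
    refine mul_le_mul ?_ hwb (norm_nonneg _) ?_
    · refine mul_le_mul_of_nonneg_left ?_ (Real.exp_pos _).le
      rw [hsplit]
      exact mul_le_mul h32 hpow (by positivity) (by positivity)
    · positivity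
  refine le_trans key (le_of_eq ?_)
  have hexp : Real.exp (-lam.re * L γ) * Real.exp (-((3:ℝ)/2) * β * L γ) =
      Real.exp (-c * L γ) := by
    rw [← Real.exp_add]
    congr 1
    rw [hcdef]
    ring
  calc Real.exp (-lam.re * L γ) *
        ((C₂ ^ ((3:ℝ)/2) * Real.exp (-((3:ℝ)/2) * β * L γ)) * q ^ (n - 1)) * (A * L γ)
      = q ^ (n - 1) * ((C₂ ^ ((3:ℝ)/2) * A) *
          (L γ * (Real.exp (-lam.re * L γ) * Real.exp (-((3:ℝ)/2) * β * L γ)))) := by ring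
    _ = q ^ (n - 1) * ((C₂ ^ ((3:ℝ)/2) * A) * (L γ * Real.exp (-c * L γ))) := by rw [hexp]
end
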